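/- Let B be the MQ × TR matrix with rows indexed by pairs (m,q), m = 0,...,M-1, q = 0,...,Q-1, and entries B_{(m,q),p} = e^{-j2π β_{mq}(-1 + 2p/(TR))}, where β_{mq} = (q + mR)/2. If M = T and Q = R, then B equals the TR × TR DFT matrix up to multiplication of each column by a unimodular scalar, and hence spark(B) = TR + 1. -/

import Mathlib

open Real

-- The spark of a matrix: the smallest number of nonzero entries of a nonzero
-- vector in its kernel, with the convention that it equals (number of columns) + 1
-- when the columns are linearly independent.
open Classical in
noncomputable def spark {m n : Type*} [Fintype m] [Fintype n] (M : Matrix m n ℂ) : ℕ :=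
  if ∃ x : n → ℂ, x ≠ 0 ∧ M.mulVec x = 0 then
    sInf {k : ℕ | ∃ x : n → ℂ, x ≠ 0 ∧ M.mulVec x = 0 ∧ (Function.support x).ncard = k}
  else Fintype.card n + 1

theorem stmt15 (T R : ℕ) (hT : 0 < T) (hR : 0 < R)
    (B : Matrix (Fin T × Fin R) (Fin (T * R)) ℂ)
    (hB : ∀ (m : Fin T) (q : Fin R) (p : Fin (T * R)),
      B (m, q) p = Complex.exp (-Complex.I *
        (2 * π * (((q : ℕ) + (m : ℕ) * R : ℝ) / 2) * (-1 + 2 * (p : ℕ) / (T * R : ℝ))))) :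
    (∃ d : Fin T × Fin R → ℂ, (∀ i, ‖d i‖ = 1) ∧
      ∀ (m : Fin T) (q : Fin R) (p : Fin (T * R)),
        B (m, q) p = d (m, q) *
          Complex.exp (-Complex.I * (2 * π * ((q : ℕ) + (m : ℕ) * R : ℝ) * (p : ℕ) / (T * R)))) ∧
    spark B = T * R + 1 := by
  have hN : (0 : ℕ) < T * R := Nat.mul_pos hT hR
  set d : Fin T × Fin R → ℂ :=
    fun i => Complex.exp (((π * ((i.2 : ℕ) + (i.1 : ℕ) * R) : ℝ)) * Complex.I) with hd
  have hdabs : ∀ i, ‖d i‖ = 1 := fun i => Complex.norm_exp_ofReal_mul_I _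
  have key : ∀ (m : Fin T) (q : Fin R) (p : Fin (T * R)),
      B (m, q) p = d (m, q) *
        Complex.exp (-Complex.I * (2 * π * ((q : ℕ) + (m : ℕ) * R : ℝ) * (p : ℕ) / (T * R))) := by
    intro m q p
    rw [hB, hd, ← Complex.exp_add]
    congr 1
    push_cast
    ring
  refine ⟨⟨d, hdabs, key⟩, ?_⟩
  -- ζ : primitive (T*R)-th root of unity
  set ζ : ℂ := Complex.exp (-(2 * π * Complex.I) / (T * R)) with hζdef
  have hζ : IsPrimitiveRoot ζ (T * R) := by
    have h := (Complex.isPrimitiveRoot_exp (T * R) hN.ne').inv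
    rwa [← Complex.exp_neg, ← neg_div, Nat.cast_mul] at h
  have hfinj : Function.Injective (fun j : Fin (T * R) => ζ ^ (j : ℕ)) := by
    intro i j hij
    exact Fin.ext (hζ.pow_inj i.isLt j.isLt hij)
  -- relate B entries to powers of ζ
  have hpow : ∀ (m : Fin T) (q : Fin R) (p : Fin (T * R)),
      Complex.exp (-Complex.I * (2 * π * ((q : ℕ) + (m : ℕ) * R : ℝ) * (p : ℕ) / (T * R)))
        = (ζ ^ (((q : ℕ) + R * (m : ℕ)) : ℕ)) ^ (p : ℕ) := by
    intro m q p
    rw [hζdef, ← Complex.exp_nat_mul, ← Complex.exp_nat_mul]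
    congr 1
    have hNne : ((T * R : ℕ) : ℂ) ≠ 0 := by exact_mod_cast hN.ne'
    field_simp
    push_cast
    ring
  -- kernel of B is trivial
  have hker : ¬ ∃ x : Fin (T * R) → ℂ, x ≠ 0 ∧ B.mulVec x = 0 := by
    rintro ⟨x, hx, hBx⟩
    apply hx
    apply Matrix.eq_zero_of_forall_index_sum_pow_mul_eq_zero hfinj
    intro j
    obtain ⟨⟨m, q⟩, rfl⟩ := finProdFinEquiv.surjective j
    have hrow := congrFun hBx (m, q)
    simp only [Matrix.mulVec, dotProduct, Pi.zero_apply] at hrow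
    have hval : ((finProdFinEquiv (m, q) : Fin (T * R)) : ℕ) = (q : ℕ) + R * (m : ℕ) := rfl
    have : ∑ p : Fin (T * R), d (m, q) * ((ζ ^ ((q : ℕ) + R * (m : ℕ))) ^ (p : ℕ) * x p) = 0 := by
      rw [← hrow]
      refine Finset.sum_congr rfl fun p _ => ?_
      rw [key m q p, hpow m q p]
      ring
    rw [← Finset.mul_sum] at this
    have hd0 : d (m, q) ≠ 0 := Complex.exp_ne_zero _
    have hsum := (mul_eq_zero.mp this).resolve_left hd0
    calc ∑ i : Fin (T * R), ((fun j : Fin (T * R) => ζ ^ (j : ℕ)) (finProdFinEquiv (m, q))) ^ (i : ℕ) * x i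
        = ∑ p : Fin (T * R), (ζ ^ ((q : ℕ) + R * (m : ℕ))) ^ (p : ℕ) * x p := by
          simp only [hval]
      _ = 0 := hsum
  rw [spark, if_neg hker]
  simp
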